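/- (Deep Sets representation.) Let N be a natural number and let f : (Fin N → ℝ) → ℝ be continuous and permutation-invariant, i.e., f (x ∘ σ) = f x for every permutation σ of Fin N. Then there exist a continuous map φ : ℝ → (Fin (N+1) → ℝ) and a continuous map ψ : (Fin (N+1) → ℝ) → ℝ such that f x = ψ (∑ i, φ (x i)) for all x : Fin N → ℝ. -/

import Mathlib

open Finset

namespace DeepSetsAux

variable {N : ℕ}

lemma aeval_psum (x : Fin N → ℝ) (k : ℕ) :
    MvPolynomial.aeval x (MvPolynomial.psum (Fin N) ℝ k) = ∑ i, x i ^ k := by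
  simp [MvPolynomial.psum]

lemma esymm_eq (x y : Fin N → ℝ)
    (hp : ∀ k, 1 ≤ k → k ≤ N → ∑ i, x i ^ k = ∑ i, y i ^ k) (j : ℕ) :
    (Multiset.map x Finset.univ.val).esymm j = (Multiset.map y Finset.univ.val).esymm j := by
  induction j using Nat.strong_induction_on with
  | _ j ih =>
    rcases Nat.eq_zero_or_pos j with rfl | hj
    · simp [Multiset.esymm]
    rcases le_or_gt j N with hjN | hjN
    · have hx := congrArg (MvPolynomial.aeval x) (MvPolynomial.mul_esymm_eq_sum (Fin N) ℝ j)
      have hy := congrArg (MvPolynomial.aeval y) (MvPolynomial.mul_esymm_eq_sum (Fin N) ℝ j)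
      simp only [map_mul, map_natCast, map_sum, map_pow, map_neg, map_one, map_ofNat,
        MvPolynomial.aeval_esymm_eq_multiset_esymm, aeval_psum] at hx hy
      have hsum : ∑ a ∈ Finset.HasAntidiagonal.antidiagonal j with a.1 < j,
          (-1 : ℝ) ^ a.1 * (Multiset.map x Finset.univ.val).esymm a.1 * ∑ i, x i ^ a.2 =
          ∑ a ∈ Finset.HasAntidiagonal.antidiagonal j with a.1 < j,
          (-1 : ℝ) ^ a.1 * (Multiset.map y Finset.univ.val).esymm a.1 * ∑ i, y i ^ a.2 := by
        refine Finset.sum_congr rfl ?_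
        intro a ha
        rw [Finset.mem_filter, Finset.HasAntidiagonal.mem_antidiagonal] at ha
        have h1 : a.1 < j := ha.2
        have h2 : 1 ≤ a.2 := by omega
        have h3 : a.2 ≤ N := by omega
        rw [ih a.1 h1, hp a.2 h2 h3]
      have hjj : (j : ℝ) ≠ 0 := by exact_mod_cast hj.ne'
      have key : (j : ℝ) * (Multiset.map x Finset.univ.val).esymm j
          = (j : ℝ) * (Multiset.map y Finset.univ.val).esymm j := by
        rw [hx, hsum, ← hy]
      exact mul_left_cancel₀ hjj key
    · have h1 : (Multiset.map x Finset.univ.val).esymm j = 0 := by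
        rw [Multiset.esymm, Multiset.powersetCard_eq_empty j (by simp [hjN])]
        simp
      have h2 : (Multiset.map y Finset.univ.val).esymm j = 0 := by
        rw [Multiset.esymm, Multiset.powersetCard_eq_empty j (by simp [hjN])]
        simp
      rw [h1, h2]

lemma multiset_eq (x y : Fin N → ℝ)
    (hp : ∀ k, 1 ≤ k → k ≤ N → ∑ i, x i ^ k = ∑ i, y i ^ k) :
    Multiset.map x Finset.univ.val = Multiset.map y Finset.univ.val := by
  have hcx : Multiset.card (Multiset.map x Finset.univ.val) = N := by simp
  have hcy : Multiset.card (Multiset.map y Finset.univ.val) = N := by simp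
  have hP : ((Multiset.map x Finset.univ.val).map fun t => Polynomial.X - Polynomial.C t).prod
      = ((Multiset.map y Finset.univ.val).map fun t => Polynomial.X - Polynomial.C t).prod := by
    rw [Multiset.prod_X_sub_X_eq_sum_esymm, Multiset.prod_X_sub_X_eq_sum_esymm, hcx, hcy]
    exact Finset.sum_congr rfl fun jj _ => by rw [esymm_eq x y hp jj]
  have := congrArg Polynomial.roots hP
  rwa [Polynomial.roots_multiset_prod_X_sub_C, Polynomial.roots_multiset_prod_X_sub_C] at this

lemma exists_perm (x y : Fin N → ℝ)
    (h : Multiset.map x Finset.univ.val = Multiset.map y Finset.univ.val) :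
    ∃ σ : Equiv.Perm (Fin N), x ∘ σ = y := by
  have h' : (List.ofFn x : Multiset ℝ) = (List.ofFn y : Multiset ℝ) := by
    simpa using h
  have hperm : (List.ofFn x).Perm (List.ofFn y) := Multiset.coe_eq_coe.mp h'
  set σx := Tuple.sort x
  set σy := Tuple.sort y
  have hps : (List.ofFn (x ∘ σx)).Perm (List.ofFn (y ∘ σy)) :=
    ((σx.ofFn_comp_perm x).trans hperm).trans (σy.ofFn_comp_perm y).symm
  have hsorted : List.ofFn (x ∘ σx) = List.ofFn (y ∘ σy) :=
    List.Perm.eq_of_sortedLE (Tuple.monotone_sort x).sortedLE_ofFn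
      (Tuple.monotone_sort y).sortedLE_ofFn hps
  have heq : x ∘ σx = y ∘ σy := List.ofFn_injective hsorted
  refine ⟨σy.symm.trans σx, ?_⟩
  funext i
  have := congrFun heq (σy.symm i)
  simpa using this

end DeepSetsAux

/-- Deep Sets representation: every continuous permutation-invariant function of
N real inputs can be written as `ψ (∑ i, φ (x i))` with continuous `φ` and `ψ`
and a latent space of dimension N + 1. -/
theorem deep_sets_representation (N : ℕ) (f : (Fin N → ℝ) → ℝ)
    (hcont : Continuous f)
    (hsym : ∀ (σ : Equiv.Perm (Fin N)) (x : Fin N → ℝ), f (x ∘ σ) = f x) :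
    ∃ (φ : ℝ → (Fin (N + 1) → ℝ)) (ψ : (Fin (N + 1) → ℝ) → ℝ),
      Continuous φ ∧ Continuous ψ ∧ ∀ x, f x = ψ (∑ i, φ (x i)) := by
  classical
  rcases Nat.eq_zero_or_pos N with rfl | hN
  · refine ⟨fun _ _ => 0, fun _ => f (fun i => i.elim0), continuous_const, continuous_const,
      fun x => congrArg f ?_⟩
    funext i; exact i.elim0
  set φ : ℝ → Fin (N + 1) → ℝ := fun t k => t ^ (k.val + 1) with hφ
  have hφc : Continuous φ := continuous_pi fun k => continuous_pow (k.val + 1)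
  set S : (Fin N → ℝ) → Fin (N + 1) → ℝ := fun x => ∑ i, φ (x i) with hSdef
  have hSapp : ∀ (x : Fin N → ℝ) (k : Fin (N + 1)), S x k = ∑ i, x i ^ (k.val + 1) := by
    intro x k
    simp [hSdef, hφ, Finset.sum_apply]
  have hSc : Continuous S := by
    refine continuous_pi fun k => ?_
    have : (fun x : Fin N → ℝ => S x k) = fun x => ∑ i, x i ^ (k.val + 1) := by
      funext x; exact hSapp x k
    rw [this]
    exact continuous_finset_sum _ fun i _ => ((continuous_apply i).pow _)
  have hSperm : ∀ (x : Fin N → ℝ) (σ : Equiv.Perm (Fin N)), S (x ∘ σ) = S x := by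
    intro x σ
    funext k
    rw [hSapp, hSapp]
    exact Fintype.sum_equiv σ _ _ fun i => rfl
  have hSinj : ∀ x y : Fin N → ℝ, S x = S y → ∃ σ : Equiv.Perm (Fin N), x ∘ σ = y := by
    intro x y h
    refine DeepSetsAux.exists_perm x y (DeepSetsAux.multiset_eq x y ?_)
    intro k hk1 hkN
    have := congrFun h ⟨k - 1, by omega⟩
    rw [hSapp, hSapp] at this
    simpa [Nat.sub_add_cancel hk1] using this
  set K : Set (Fin N → ℝ) := {x | Monotone x} with hKdef
  have hKc : IsClosed K := by
    have : K = ⋂ (p : Fin N × Fin N) (_ : p.1 ≤ p.2), {x : Fin N → ℝ | x p.1 ≤ x p.2} := by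
      ext x
      simp only [hKdef, Set.mem_setOf_eq, Set.mem_iInter]
      exact ⟨fun h p hp => h hp, fun h a b hab => h (a, b) hab⟩
    rw [this]
    exact isClosed_iInter fun p => isClosed_iInter fun _ =>
      isClosed_le (continuous_apply _) (continuous_apply _)
  set g : K → Fin (N + 1) → ℝ := fun x => S x.1 with hgdef
  have hgc : Continuous g := hSc.comp continuous_subtype_val
  have hginj : Function.Injective g := by
    rintro ⟨x, hx⟩ ⟨y, hy⟩ h
    obtain ⟨σ, hσ⟩ := hSinj x y h
    have hmono : Monotone (x ∘ σ) := hσ ▸ hy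
    have : x ∘ σ = x ∘ (Equiv.refl (Fin N)) :=
      Tuple.unique_monotone hmono (by exact hx)
    have hyx : y = x := by
      rw [← hσ, this]; funext i; simp
    exact Subtype.ext hyx.symm
  -- index with exponent 2
  have h1lt : (1 : ℕ) < N + 1 := by omega
  set i2 : Fin (N + 1) := ⟨1, h1lt⟩ with hi2
  have hproper : IsProperMap g := by
    rw [isProperMap_iff_isCompact_preimage]
    refine ⟨hgc, fun C hC => ?_⟩
    obtain ⟨R, hR⟩ : ∃ R : ℝ, ∀ z ∈ C, z i2 ≤ R := by
      rcases (hC.image (continuous_apply i2)).bddAbove with ⟨R, hR⟩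
      exact ⟨R, fun z hz => hR ⟨z, hz, rfl⟩⟩
    have hsub : Subtype.val '' (g ⁻¹' C) ⊆ (Set.univ.pi fun _ : Fin N =>
        Set.Icc (-Real.sqrt R) (Real.sqrt R)) := by
      rintro x ⟨⟨x', hx'⟩, hxC, rfl⟩
      intro i _
      have hsum : ∑ j, x' j ^ 2 ≤ R := by
        have h := hR _ hxC
        have h' : S x' i2 ≤ R := h
        rw [hSapp] at h'
        simpa [hi2] using h'
      have hle : x' i ^ 2 ≤ R :=
        le_trans (Finset.single_le_sum (fun j _ => sq_nonneg (x' j)) (Finset.mem_univ i)) hsum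
      have habs : |x' i| ≤ Real.sqrt R := by
        rw [← Real.sqrt_sq_eq_abs]
        exact Real.sqrt_le_sqrt hle
      exact ⟨neg_le_of_abs_le habs, le_of_abs_le habs⟩
    have hclosed : IsClosed (Subtype.val '' (g ⁻¹' C)) := by
      have : Subtype.val '' (g ⁻¹' C) = S ⁻¹' C ∩ K := by
        ext x
        constructor
        · rintro ⟨⟨x', hx'⟩, hxC, rfl⟩; exact ⟨hxC, hx'⟩
        · rintro ⟨h1, h2⟩; exact ⟨⟨x, h2⟩, h1, rfl⟩
      rw [this]
      exact (hC.isClosed.preimage hSc).inter hKc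
    have hcomp : IsCompact (Subtype.val '' (g ⁻¹' C)) :=
      IsCompact.of_isClosed_subset
        (isCompact_univ_pi fun _ => isCompact_Icc) hclosed hsub
    exact Topology.IsEmbedding.subtypeVal.isCompact_iff.mpr hcomp
  have hCE : Topology.IsClosedEmbedding g :=
    Topology.IsClosedEmbedding.of_continuous_injective_isClosedMap hgc hginj
      hproper.isClosedMap
  set T : Set (Fin (N + 1) → ℝ) := Set.range g with hTdef
  have hTc : IsClosed T := hCE.isClosed_range
  set e : K ≃ₜ T := hCE.isEmbedding.toHomeomorph with hedef
  set ψ₀ : C(T, ℝ) := ⟨fun z => f ((e.symm z : K) : Fin N → ℝ),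
    hcont.comp (continuous_subtype_val.comp e.symm.continuous)⟩ with hψ₀
  obtain ⟨ψC, hψC⟩ := ψ₀.exists_restrict_eq hTc
  refine ⟨φ, ψC, hφc, ψC.continuous, ?_⟩
  intro x
  set σ := Tuple.sort x
  have hmono : Monotone (x ∘ σ) := Tuple.monotone_sort x
  set p : K := ⟨x ∘ σ, hmono⟩ with hpdef
  have hgp : g p = S x := hSperm x σ
  have hmem : S x ∈ T := ⟨p, hgp⟩
  have h1 : ψC (S x) = ψ₀ ⟨S x, hmem⟩ := by
    have := congrFun (congrArg DFunLike.coe hψC) ⟨S x, hmem⟩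
    simpa [ContinuousMap.restrict_apply] using this
  have h2 : e.symm ⟨S x, hmem⟩ = p := by
    apply e.injective
    rw [Homeomorph.apply_symm_apply]
    exact Subtype.ext hgp.symm
  have h3 : ψ₀ ⟨S x, hmem⟩ = f (x ∘ σ) := by
    rw [hψ₀]
    simp only [ContinuousMap.coe_mk]
    rw [h2]
  show f x = ψC (S x)
  rw [h1, h3, hsym]
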